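/- Let f be a signature of even arity n ≥ 4 and suppose there is a balanced string α ∈ supp(f), i.e., #1(α) = #0(α). Then there exist indices i ≠ j such that the ≠₂-self-loop of f at (i,j) has a balanced string in its support. -/
import Mathlib


/-- Number of `1`s (Hamming weight) of a Boolean string. -/
def wt1 {n : ℕ} (x : Fin n → Bool) : ℕ := (Finset.univ.filter fun i => x i = true).card

/-- The `≠₂`-self-loop of a signature `f` of arity `n+2`, connecting the
variable at position `i` with the variable at position `j` among the remaining
ones: `x ↦ f(x with xᵢ=0, xⱼ=1) + f(x with xᵢ=1, xⱼ=0)`. -/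
noncomputable def selfLoop {n : ℕ} (f : (Fin (n + 2) → Bool) → ℂ)
    (i : Fin (n + 2)) (j : Fin (n + 1)) : (Fin n → Bool) → ℂ :=
  fun x => f (i.insertNth false (j.insertNth true x)) +
    f (i.insertNth true (j.insertNth false x))

lemma wt1_eq_sum {n : ℕ} (x : Fin n → Bool) :
    wt1 x = ∑ i, if x i = true then 1 else 0 := Finset.card_filter _ _

lemma wt1_insertNth {n : ℕ} (p : Fin (n + 1)) (b : Bool) (x : Fin n → Bool) :
    wt1 (p.insertNth b x) = (if b = true then 1 else 0) + wt1 x := by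
  rw [wt1_eq_sum, wt1_eq_sum, Fin.sum_univ_succAbove _ p]
  simp

lemma wt1_update {n : ℕ} (p : Fin (n + 1)) (b : Bool) (x : Fin (n + 1) → Bool) :
    wt1 (Function.update x p b) + (if x p = true then 1 else 0)
      = wt1 x + (if b = true then 1 else 0) := by
  have h1 : Function.update x p b = p.insertNth b (p.removeNth x) := by
    rw [Fin.insertNth_removeNth]
  conv_rhs => rw [← Fin.insertNth_self_removeNth p x]
  rw [h1, wt1_insertNth, wt1_insertNth]
  ring

lemma insertNth_update {n : ℕ} (p : Fin (n + 1)) (a : Bool) (j : Fin n) (c : Bool)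
    (x : Fin n → Bool) :
    p.insertNth a (Function.update x j c)
      = Function.update (p.insertNth a x : Fin (n + 1) → Bool) (p.succAbove j) c := by
  ext i
  refine p.succAboveCases ?_ ?_ i
  · simp [Function.update_apply, Fin.ne_succAbove]
  · intro k
    simp [Function.update_apply, Fin.succAbove_right_inj]

/-- Key step: the self-loop of `f` at a zero position `p` and a one position `q`
of `γ`, evaluated at the remaining string, is `f γ + f (γ with p,q swapped)`,
and the remaining string is balanced if `γ` is. -/
lemma key {m : ℕ} (f : (Fin (m + 2) → Bool) → ℂ) (γ : Fin (m + 2) → Bool)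
    (p q : Fin (m + 2)) (hpq : p ≠ q) (hp : γ p = false) (hq : γ q = true)
    (hbal : 2 * wt1 γ = m + 2) :
    ∃ (i : Fin (m + 2)) (j : Fin (m + 1)) (β : Fin m → Bool),
      selfLoop f i j β
        = f γ + f (Function.update (Function.update γ p true) q false)
      ∧ 2 * wt1 β = m := by
  obtain ⟨j, hj⟩ := Fin.exists_succAbove_eq hpq.symm
  have hrj : (p.removeNth γ) j = true := by
    simpa [Fin.removeNth, hj] using hq
  have h1 : j.insertNth true (j.removeNth (p.removeNth γ)) = p.removeNth γ := by
    rw [← hrj, Fin.insertNth_self_removeNth]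
  have h2 : j.insertNth false (j.removeNth (p.removeNth γ))
      = Function.update (p.removeNth γ) j false := Fin.insertNth_removeNth _ _ _
  have h3 : p.insertNth false (p.removeNth γ) = γ := by
    rw [← hp, Fin.insertNth_self_removeNth]
  have h4 : p.insertNth true (Function.update (p.removeNth γ) j false)
      = Function.update (Function.update γ p true) q false := by
    rw [insertNth_update, hj, Fin.insertNth_removeNth]
  refine ⟨p, j, j.removeNth (p.removeNth γ), ?_, ?_⟩
  · simp only [selfLoop, h1, h2, h3, h4]
  · have hγ : γ = p.insertNth false (j.insertNth true (j.removeNth (p.removeNth γ))) := by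
      rw [h1, h3]
    rw [hγ, wt1_insertNth, wt1_insertNth] at hbal
    simp at hbal
    omega

/-- let `f` have even arity `m + 2 ≥ 4` and have a balanced
string `α` in its support (`#1(α) = #0(α)`, i.e. `2·#1(α) = m + 2`). Then some
`≠₂`-self-loop of `f` has a balanced string in its support. -/
theorem stmt13 {m : ℕ} (hm : 2 ≤ m) (hev : Even (m + 2))
    (f : (Fin (m + 2) → Bool) → ℂ) (α : Fin (m + 2) → Bool)
    (hα : f α ≠ 0) (hbal : 2 * wt1 α = m + 2) :
    ∃ (i : Fin (m + 2)) (j : Fin (m + 1)) (β : Fin m → Bool),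
      selfLoop f i j β ≠ 0 ∧ 2 * wt1 β = m := by
  classical
  -- find a zero position p and two distinct one positions q, r
  have hsplit : (Finset.univ.filter fun i => α i = true).card
      + (Finset.univ.filter fun i => ¬ (α i = true)).card = m + 2 := by
    rw [Finset.card_filter_add_card_filter_not]
    simp
  have hTcard : (Finset.univ.filter fun i => α i = true).card = wt1 α := rfl
  have hFpos : 0 < (Finset.univ.filter fun i => ¬ (α i = true)).card := by omega
  obtain ⟨p, hpmem⟩ := Finset.card_pos.mp hFpos
  have hp : α p = false := by
    have := Finset.mem_filter.mp hpmem
    simpa using this.2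
  have hT2 : 1 < (Finset.univ.filter fun i => α i = true).card := by omega
  obtain ⟨q, hqmem, r, hrmem, hqr⟩ := Finset.one_lt_card.mp hT2
  have hq : α q = true := by simpa using hqmem
  have hr : α r = true := by simpa using hrmem
  have hpq : p ≠ q := by intro h; rw [h, hq] at hp; exact absurd hp (by simp)
  have hpr : p ≠ r := by intro h; rw [h, hr] at hp; exact absurd hp (by simp)
  -- case 1
  obtain ⟨i1, j1, β1, hv1, hb1⟩ := key f α p q hpq hp hq hbal
  by_cases h1 : f α + f (Function.update (Function.update α p true) q false) ≠ 0
  · exact ⟨i1, j1, β1, by rw [hv1]; exact h1, hb1⟩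
  push_neg at h1
  set γ1 := Function.update (Function.update α p true) q false with hγ1
  have hf1 : f γ1 = -f α := by linear_combination h1
  -- γ1 facts
  have hγ1q : γ1 q = false := by simp [hγ1]
  have hγ1r : γ1 r = true := by simp [hγ1, Function.update_apply, hqr.symm, hpr.symm, hr]
  have hwt1' : wt1 (Function.update α p true) = wt1 α + 1 := by
    have := wt1_update p true α
    rw [hp] at this; simp at this; omega
  have hwtγ1 : wt1 γ1 = wt1 α := by
    have := wt1_update q false (Function.update α p true)
    rw [Function.update_apply] at this
    simp [hpq.symm, hq] at this
    rw [hγ1]; omega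
  have hbal1 : 2 * wt1 γ1 = m + 2 := by rw [hwtγ1]; exact hbal
  -- case 2
  obtain ⟨i2, j2, β2, hv2, hb2⟩ := key f γ1 q r hqr hγ1q hγ1r hbal1
  by_cases h2 : f γ1 + f (Function.update (Function.update γ1 q true) r false) ≠ 0
  · exact ⟨i2, j2, β2, by rw [hv2]; exact h2, hb2⟩
  push_neg at h2
  have hγ2 : Function.update (Function.update γ1 q true) r false
      = Function.update (Function.update α p true) r false := by
    funext i
    simp only [hγ1, Function.update_apply]
    by_cases hir : i = r
    · simp [hir]
    by_cases hiq : i = q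
    · simp [hir, hiq, Ne.symm hpq, hq]
    simp [hir, hiq]
  -- case 3
  obtain ⟨i3, j3, β3, hv3, hb3⟩ := key f α p r hpr hp hr hbal
  refine ⟨i3, j3, β3, ?_, hb3⟩
  rw [hv3, ← hγ2]
  have h3 : f (Function.update (Function.update γ1 q true) r false) = f α := by
    linear_combination h2 - hf1
  rw [h3]
  intro hc
  exact hα (by linear_combination hc / 2)
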